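/- Coercivity of the linearization at the kink on odd functions: for ℒ = -d²/dy² - 1 + 3tanh²(y/√2), there exists c₀ > 0 such that ⟨ℒv, v⟩ ≥ c₀‖v‖²_{H¹} for every odd v ∈ H¹(ℝ). -/

import Mathlib

open MeasureTheory

private lemma cs_Ioc (g : ℝ → ℝ) {a b : ℝ} (hab : a ≤ b)
    (h1 : IntegrableOn g (Set.Ioc a b)) (h2 : IntegrableOn (fun x => g x ^ 2) (Set.Ioc a b)) :
    (∫ x in Set.Ioc a b, g x) ^ 2 ≤ (b - a) * ∫ x in Set.Ioc a b, g x ^ 2 := by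
  rcases eq_or_lt_of_le hab with rfl | hba'
  · simp
  have hba : (0:ℝ) < b - a := by linarith
  have habs : IntegrableOn (fun x => |g x|) (Set.Ioc a b) := h1.abs
  set I : ℝ := ∫ x in Set.Ioc a b, |g x| with hI
  set J : ℝ := ∫ x in Set.Ioc a b, g x ^ 2 with hJ
  set c : ℝ := I / (b - a) with hc
  have key : 0 ≤ ∫ x in Set.Ioc a b, (|g x| - c) ^ 2 :=
    setIntegral_nonneg measurableSet_Ioc fun x _ => sq_nonneg _
  have hvol : (volume (Set.Ioc a b)).toReal = b - a := by
    rw [Real.volume_Ioc, ENNReal.toReal_ofReal (by linarith)]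
  have hsub : IntegrableOn (fun x => g x ^ 2 - 2 * c * |g x|) (Set.Ioc a b) :=
    h2.sub (habs.const_mul (2 * c))
  have hconst : IntegrableOn (fun _ : ℝ => c ^ 2) (Set.Ioc a b) :=
    integrableOn_const measure_Ioc_lt_top.ne
  have expand : ∫ x in Set.Ioc a b, (|g x| - c) ^ 2
      = (J - (2 * c) * I) + c ^ 2 * (b - a) := by
    have heq : (fun x => (|g x| - c) ^ 2)
        = fun x => (g x ^ 2 - 2 * c * |g x|) + c ^ 2 := by
      funext x
      have h := sq_abs (g x)
      nlinarith [sq_abs (g x)]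
    rw [heq, integral_add hsub hconst, integral_sub h2 (habs.const_mul (2 * c)),
      integral_const_mul, setIntegral_const, measureReal_def, hvol, smul_eq_mul, ← hI, ← hJ]
    ring
  have hIg : |∫ x in Set.Ioc a b, g x| ≤ I := by
    simpa [Real.norm_eq_abs] using
      norm_integral_le_integral_norm (μ := volume.restrict (Set.Ioc a b)) g
  have hcb : c * (b - a) = I := by rw [hc]; field_simp
  have hcb2 : (c * (b - a)) ^ 2 = I ^ 2 := by rw [hcb]
  rw [expand] at key
  have hsq : (∫ x in Set.Ioc a b, g x) ^ 2 ≤ I ^ 2 := by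
    rw [← sq_abs (∫ x in Set.Ioc a b, g x)]
    exact pow_le_pow_left₀ (abs_nonneg _) hIg 2
  nlinarith [mul_nonneg key hba.le, hcb, hcb2, hsq]

private lemma cosh_lower_bound (t : ℝ) : 1 + t ^ 2 / 2 ≤ Real.cosh t := by
  have h1 : Real.cosh t = 2 * Real.sinh (t / 2) ^ 2 + 1 := by
    have h := Real.cosh_two_mul (t / 2)
    have h2 := Real.cosh_sq (t / 2)
    rw [show 2 * (t / 2) = t by ring] at h
    rw [h, h2]; ring
  have h3 : |t / 2| ≤ Real.sinh |t / 2| := by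
    rcases eq_or_lt_of_le (abs_nonneg (t / 2)) with h | h
    · simp [← h]
    · exact (Real.self_lt_sinh_iff.mpr h).le
  have h4 : (t / 2) ^ 2 ≤ Real.sinh (t / 2) ^ 2 := by
    have he : Real.sinh (t / 2) ^ 2 = Real.sinh |t / 2| ^ 2 := by
      rcases abs_cases (t / 2) with ⟨h, _⟩ | ⟨h, _⟩ <;> simp [h, Real.sinh_neg]
    rw [he, ← sq_abs (t / 2)]
    exact pow_le_pow_left₀ (abs_nonneg _) h3 2
  nlinarith [h4]

private lemma tanh_sq_eq (x : ℝ) : Real.tanh x ^ 2 = 1 - 1 / Real.cosh x ^ 2 := by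
  have hc := Real.cosh_pos x
  have hs : Real.sinh x ^ 2 = Real.cosh x ^ 2 - 1 := by
    have := Real.cosh_sq x; linarith
  rw [Real.tanh_eq_sinh_div_cosh, div_pow, hs]
  field_simp

private lemma tanh_sq_le_one (x : ℝ) : Real.tanh x ^ 2 ≤ 1 := by
  rw [tanh_sq_eq]
  have hc := Real.cosh_pos x
  have : 0 ≤ 1 / Real.cosh x ^ 2 := by positivity
  linarith

private lemma outer_bound {y : ℝ} (hy : (13:ℝ)/10 ≤ |y|) :
    0 ≤ 3 * Real.tanh (y / Real.sqrt 2) ^ 2 - 1 - 1/50 := by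
  have hts : (y / Real.sqrt 2) ^ 2 = y ^ 2 / 2 := by
    rw [div_pow, Real.sq_sqrt (by norm_num : (0:ℝ) ≤ 2)]
  have hy2 : (169:ℝ)/100 ≤ y ^ 2 := by
    have h := sq_abs y
    nlinarith [abs_nonneg y]
  have hc : (1:ℝ) + 169/400 ≤ Real.cosh (y / Real.sqrt 2) := by
    refine le_trans ?_ (cosh_lower_bound _)
    rw [hts]; linarith
  have hc2 : ((1:ℝ) + 169/400) ^ 2 ≤ Real.cosh (y / Real.sqrt 2) ^ 2 :=
    pow_le_pow_left₀ (by norm_num) hc 2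
  have h3 : 1 / Real.cosh (y / Real.sqrt 2) ^ 2 ≤ 1 / ((1:ℝ) + 169/400) ^ 2 :=
    one_div_le_one_div_of_le (by norm_num) hc2
  rw [tanh_sq_eq]
  nlinarith

private lemma deriv_locally_integrable {v : ℝ → ℝ}
    (hd2 : Integrable (fun y => deriv v y ^ 2)) (a b : ℝ) :
    IntegrableOn (deriv v) (Set.Ioc a b) := by
  have hmeas : Measurable (deriv v) := measurable_deriv v
  have hbd : IntegrableOn (fun y => deriv v y ^ 2 + 1) (Set.Ioc a b) :=
    (hd2.integrableOn).add (integrableOn_const measure_Ioc_lt_top.ne)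
  refine hbd.mono' hmeas.aestronglyMeasurable ?_
  filter_upwards with y
  rw [Real.norm_eq_abs]
  nlinarith [sq_nonneg (|deriv v y| - 1), sq_abs (deriv v y)]

private lemma cs_Ioc' : True := trivial

private lemma hardy_right (v : ℝ → ℝ) (hv : Differentiable ℝ v) (h0 : v 0 = 0)
    (hd2 : Integrable (fun y => deriv v y ^ 2)) {R : ℝ} (hR : 0 ≤ R) :
    ∫ y in Set.Ioc 0 R, (v y) ^ 2 ≤ R ^ 2 / 2 * ∫ y in Set.Ioc 0 R, (deriv v y) ^ 2 := by
  set g := deriv v with hg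
  set A : ℝ := ∫ y in Set.Ioc 0 R, g y ^ 2 with hA
  have hA0 : 0 ≤ A := setIntegral_nonneg measurableSet_Ioc fun x _ => sq_nonneg _
  have hpt : ∀ y ∈ Set.Ioc (0:ℝ) R, (v y) ^ 2 ≤ y * A := by
    intro y hy
    have hy0 : (0:ℝ) ≤ y := hy.1.le
    have hii : IntervalIntegrable g volume 0 y := by
      rw [intervalIntegrable_iff, Set.uIoc_of_le hy0]
      exact deriv_locally_integrable hd2 0 y
    have hftc : ∫ t in (0:ℝ)..y, g t = v y - v 0 :=
      intervalIntegral.integral_deriv_eq_sub (fun x _ => hv x) hii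
    have hvy : v y = ∫ t in Set.Ioc 0 y, g t := by
      rw [← intervalIntegral.integral_of_le hy0, hftc, h0, sub_zero]
    have hcs : (∫ t in Set.Ioc 0 y, g t) ^ 2 ≤ (y - 0) * ∫ t in Set.Ioc 0 y, g t ^ 2 :=
      cs_Ioc g hy0 (deriv_locally_integrable hd2 0 y)
        hd2.integrableOn
    have hmono : ∫ t in Set.Ioc 0 y, g t ^ 2 ≤ A := by
      refine setIntegral_mono_set hd2.integrableOn ?_ ?_
      · filter_upwards with t using sq_nonneg _
      · exact (Set.Ioc_subset_Ioc_right hy.2).eventuallyLE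
    calc (v y) ^ 2 = (∫ t in Set.Ioc 0 y, g t) ^ 2 := by rw [hvy]
      _ ≤ (y - 0) * ∫ t in Set.Ioc 0 y, g t ^ 2 := hcs
      _ ≤ y * A := by
          rw [sub_zero]
          exact mul_le_mul_of_nonneg_left hmono hy0
  have hv2int : IntegrableOn (fun y => (v y) ^ 2) (Set.Ioc 0 R) :=
    ((hv.continuous.pow 2).continuousOn).integrableOn_Icc.mono_set Set.Ioc_subset_Icc_self
  have hlin : IntegrableOn (fun y => y * A) (Set.Ioc 0 R) :=
    ((continuous_id.mul continuous_const).continuousOn).integrableOn_Icc.mono_set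
      Set.Ioc_subset_Icc_self
  have hstep : ∫ y in Set.Ioc 0 R, (v y) ^ 2 ≤ ∫ y in Set.Ioc 0 R, y * A :=
    setIntegral_mono_on hv2int hlin measurableSet_Ioc hpt
  have hid : ∫ y in Set.Ioc 0 R, y * A = R ^ 2 / 2 * A := by
    rw [integral_mul_const]
    have : ∫ y in Set.Ioc 0 R, y = R ^ 2 / 2 := by
      rw [← intervalIntegral.integral_of_le hR, integral_id]
      ring
    rw [this]
  calc ∫ y in Set.Ioc 0 R, (v y) ^ 2 ≤ ∫ y in Set.Ioc 0 R, y * A := hstep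
    _ = R ^ 2 / 2 * A := hid
private lemma even_reflect_integral (f : ℝ → ℝ) (hf : ∀ y, f (-y) = f y) :
    ∫ y in Set.Ioc (-(13/10):ℝ) 0, f y = ∫ y in Set.Ioc (0:ℝ) (13/10), f y := by
  rw [← intervalIntegral.integral_of_le (by norm_num : (-(13/10):ℝ) ≤ 0),
      ← intervalIntegral.integral_of_le (by norm_num : (0:ℝ) ≤ 13/10)]
  have h := intervalIntegral.integral_comp_neg (a := 0) (b := 13/10) f
  simp only [neg_zero] at h
  rw [← h]
  exact intervalIntegral.integral_congr fun x _ => hf x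

/-- Coercivity of ℒ = -d²/dy² - 1 + 3tanh²(y/√2) on odd H¹ functions:
⟨ℒv, v⟩ ≥ c₀‖v‖²_{H¹}. -/
theorem L_coercive_odd :
    ∃ c₀ : ℝ, 0 < c₀ ∧
      ∀ v : ℝ → ℝ, Differentiable ℝ v →
        (∀ y : ℝ, v (-y) = -v y) →
        Integrable (fun y => (v y) ^ 2) →
        Integrable (fun y => (deriv v y) ^ 2) →
        (∫ y : ℝ, ((deriv v y) ^ 2 - (v y) ^ 2
            + 3 * (Real.tanh (y / Real.sqrt 2)) ^ 2 * (v y) ^ 2))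
          ≥ c₀ * (∫ y : ℝ, ((deriv v y) ^ 2 + (v y) ^ 2)) := by
  refine ⟨1/50, by norm_num, ?_⟩
  intro v hdiff hodd hv2 hd2
  have hv0 : v 0 = 0 := by have h := hodd 0; simp only [neg_zero] at h; linarith
  have hgeven : ∀ y : ℝ, deriv v (-y) = deriv v y := by
    intro y
    have hveq : v = fun x => -v (-x) := funext fun x => by rw [hodd x]; ring
    have h2 : deriv (fun x => -v (-x)) y = deriv v (-y) := by
      rw [deriv.fun_neg, deriv_comp_neg, neg_neg]
    calc deriv v (-y) = deriv (fun x => -v (-x)) y := h2.symm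
      _ = deriv v y := by rw [← hveq]
  -- integrability of the potential term
  have hWc : Continuous fun y : ℝ => 3 * Real.tanh (y / Real.sqrt 2) ^ 2 * v y ^ 2 := by
    have htc : Continuous Real.tanh := by
      rw [show Real.tanh = fun x => Real.sinh x / Real.cosh x from
        funext Real.tanh_eq_sinh_div_cosh]
      exact Real.continuous_sinh.div Real.continuous_cosh fun x => (Real.cosh_pos x).ne'
    have : Continuous fun y : ℝ => Real.tanh (y / Real.sqrt 2) :=
      htc.comp (continuous_id.div_const _)
    exact (continuous_const.mul (this.pow 2)).mul ((hdiff.continuous).pow 2)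
  have hT : Integrable (fun y => 3 * Real.tanh (y / Real.sqrt 2) ^ 2 * v y ^ 2) := by
    refine (hv2.const_mul 3).mono' hWc.aestronglyMeasurable ?_
    filter_upwards with y
    have h1 := tanh_sq_le_one (y / Real.sqrt 2)
    have h2 : (0:ℝ) ≤ Real.tanh (y / Real.sqrt 2) ^ 2 := sq_nonneg _
    rw [Real.norm_eq_abs, abs_of_nonneg (by positivity)]
    nlinarith [sq_nonneg (v y)]
  set I1 : ℝ := ∫ y, deriv v y ^ 2 with hI1
  set I2 : ℝ := ∫ y, v y ^ 2 with hI2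
  set T : ℝ := ∫ y, 3 * Real.tanh (y / Real.sqrt 2) ^ 2 * v y ^ 2 with hTdef
  have hLHS : (∫ y : ℝ, (deriv v y ^ 2 - v y ^ 2
      + 3 * Real.tanh (y / Real.sqrt 2) ^ 2 * v y ^ 2)) = I1 - I2 + T := by
    rw [integral_add (show Integrable (fun y => deriv v y ^ 2 - v y ^ 2) volume from
      hd2.sub hv2) hT, integral_sub hd2 hv2]
  have hRHS : (∫ y : ℝ, (deriv v y ^ 2 + v y ^ 2)) = I1 + I2 := integral_add hd2 hv2
  -- the quadratic form F with the margin built in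
  have hFint : Integrable (fun y => 49/50 * deriv v y ^ 2
      + 3 * Real.tanh (y / Real.sqrt 2) ^ 2 * v y ^ 2 - 51/50 * v y ^ 2) :=
    ((hd2.const_mul _).add hT).sub (hv2.const_mul _)
  have hFval : (∫ y : ℝ, (49/50 * deriv v y ^ 2
      + 3 * Real.tanh (y / Real.sqrt 2) ^ 2 * v y ^ 2 - 51/50 * v y ^ 2))
      = 49/50 * I1 + T - 51/50 * I2 := by
    rw [integral_sub (show Integrable (fun y => 49/50 * deriv v y ^ 2
        + 3 * Real.tanh (y / Real.sqrt 2) ^ 2 * v y ^ 2) volume from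
        (hd2.const_mul _).add hT) (hv2.const_mul _),
      integral_add (hd2.const_mul _) hT, integral_const_mul, integral_const_mul]
  -- positivity of ∫ F
  have hF0 : 0 ≤ ∫ y : ℝ, (49/50 * deriv v y ^ 2
      + 3 * Real.tanh (y / Real.sqrt 2) ^ 2 * v y ^ 2 - 51/50 * v y ^ 2) := by
    set s : Set ℝ := Set.Ioc (-(13/10)) (13/10) with hs
    rw [← integral_add_compl (measurableSet_Ioc :
      MeasurableSet s) hFint]
    have houter : 0 ≤ ∫ y in sᶜ, (49/50 * deriv v y ^ 2
        + 3 * Real.tanh (y / Real.sqrt 2) ^ 2 * v y ^ 2 - 51/50 * v y ^ 2) := by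
      refine setIntegral_nonneg (measurableSet_Ioc.compl) fun y hy => ?_
      have hy' : (13:ℝ)/10 ≤ |y| := by
        simp only [hs, Set.mem_compl_iff, Set.mem_Ioc, not_and_or, not_lt, not_le] at hy
        rcases hy with h | h
        · rw [abs_of_nonpos (by linarith)]; linarith
        · rw [abs_of_pos (by linarith)]; linarith
      have hb := outer_bound hy'
      nlinarith [sq_nonneg (deriv v y), sq_nonneg (v y)]
    have hinner : 0 ≤ ∫ y in s, (49/50 * deriv v y ^ 2
        + 3 * Real.tanh (y / Real.sqrt 2) ^ 2 * v y ^ 2 - 51/50 * v y ^ 2) := by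
      -- split into pieces over s
      have hsplit : ∀ f : ℝ → ℝ, IntegrableOn f s →
          ∫ y in s, f y = (∫ y in Set.Ioc (-(13/10):ℝ) 0, f y)
            + ∫ y in Set.Ioc (0:ℝ) (13/10), f y := by
        intro f hf
        rw [← setIntegral_union (Set.Ioc_disjoint_Ioc_of_le le_rfl) measurableSet_Ioc
          (hf.mono_set (Set.Ioc_subset_Ioc_right (by norm_num)))
          (hf.mono_set (Set.Ioc_subset_Ioc_left (by norm_num))),
          Set.Ioc_union_Ioc_eq_Ioc (by norm_num) (by norm_num)]
      have hB : ∫ y in s, v y ^ 2 = 2 * ∫ y in Set.Ioc (0:ℝ) (13/10), v y ^ 2 := by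
        rw [hsplit _ hv2.integrableOn,
          even_reflect_integral (fun y => v y ^ 2)
            (fun y => by show v (-y) ^ 2 = v y ^ 2; rw [hodd y]; ring)]
        ring
      have hA : ∫ y in s, deriv v y ^ 2
          = 2 * ∫ y in Set.Ioc (0:ℝ) (13/10), deriv v y ^ 2 := by
        rw [hsplit _ hd2.integrableOn,
          even_reflect_integral (fun y => deriv v y ^ 2)
            (fun y => by show deriv v (-y) ^ 2 = deriv v y ^ 2; rw [hgeven y])]
        ring
      have hhardy := hardy_right v hdiff hv0 hd2 (by norm_num : (0:ℝ) ≤ 13/10)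
      have hA0 : 0 ≤ ∫ y in Set.Ioc (0:ℝ) (13/10), deriv v y ^ 2 :=
        setIntegral_nonneg measurableSet_Ioc fun x _ => sq_nonneg _
      have hTs : 0 ≤ ∫ y in s, 3 * Real.tanh (y / Real.sqrt 2) ^ 2 * v y ^ 2 :=
        setIntegral_nonneg measurableSet_Ioc fun x _ => by positivity
      have hFs : ∫ y in s, (49/50 * deriv v y ^ 2
          + 3 * Real.tanh (y / Real.sqrt 2) ^ 2 * v y ^ 2 - 51/50 * v y ^ 2)
          = 49/50 * (∫ y in s, deriv v y ^ 2)
            + (∫ y in s, 3 * Real.tanh (y / Real.sqrt 2) ^ 2 * v y ^ 2)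
            - 51/50 * (∫ y in s, v y ^ 2) := by
        rw [integral_sub (show Integrable (fun y => 49/50 * deriv v y ^ 2
            + 3 * Real.tanh (y / Real.sqrt 2) ^ 2 * v y ^ 2) (volume.restrict s) from
            ((hd2.integrableOn).const_mul _).add hT.integrableOn)
            ((hv2.integrableOn).const_mul _),
          integral_add ((hd2.integrableOn).const_mul _) hT.integrableOn,
          integral_const_mul, integral_const_mul]
      rw [hFs, hA, hB]
      nlinarith [hhardy, hA0, hTs]
    exact add_nonneg hinner houter
  rw [hLHS, hRHS, ge_iff_le]
  rw [hFval] at hF0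
  linarith
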